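/- Fix c ∈ (0,1] and n ≥ 1. The function R̃_n(x) = -ψ(n+c-x) - ψ(n+x) - 2γ is strictly decreasing on (0, c/2) and strictly increasing on (c/2, c], and satisfies R̃_n(x) < 0 for all x ∈ (0, c]. -/

import Mathlib

noncomputable def digamma (x : ℝ) : ℝ := deriv (fun y : ℝ => Real.log (Real.Gamma y)) x

noncomputable def Bc (c x : ℝ) : ℝ := Real.Gamma x * Real.Gamma (c - x) / Real.Gamma c

noncomputable def Rc (c x : ℝ) : ℝ :=
  -digamma x - digamma (c - x) - 2 * Real.eulerMascheroniConstant

noncomputable def Rtilde (c : ℝ) (n : ℕ) (x : ℝ) : ℝ :=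
  -digamma (n + c - x) - digamma (n + x) - 2 * Real.eulerMascheroniConstant

open Real Set Filter Topology

private lemma ne_neg_nat {x : ℝ} (hx : 0 < x) : ∀ m : ℕ, x ≠ -m :=
  fun m => ne_of_gt (by have : (0:ℝ) ≤ m := m.cast_nonneg; linarith)

private lemma diffLG {x : ℝ} (hx : 0 < x) :
    DifferentiableAt ℝ (fun y : ℝ => Real.log (Real.Gamma y)) x :=
  (Real.differentiableAt_Gamma (ne_neg_nat hx)).log (Real.Gamma_ne_zero (ne_neg_nat hx))

private lemma lg_rec {x : ℝ} (hx : 0 < x) :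
    Real.log (Real.Gamma (x + 1)) = Real.log (Real.Gamma x) + Real.log x := by
  rw [Real.Gamma_add_one hx.ne', Real.log_mul hx.ne' (Real.Gamma_pos_of_pos hx).ne', add_comm]

/-- Recurrence for digamma. -/
private lemma digamma_rec {x : ℝ} (hx : 0 < x) : digamma (x + 1) = digamma x + 1 / x := by
  unfold digamma
  rw [← deriv_comp_add_const, one_div, ← Real.deriv_log,
    ← deriv_add (diffLG hx) (Real.differentiableAt_log hx.ne')]
  apply Filter.EventuallyEq.deriv_eq
  filter_upwards [eventually_gt_nhds hx] with y hy using lg_rec hy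

private lemma hcvx : ConvexOn ℝ (Set.Ioi 0) (fun y : ℝ => Real.log (Real.Gamma y)) := by
  have := Real.convexOn_log_Gamma
  simpa [Function.comp_def] using this

/-- digamma is monotone on positives. -/
private lemma digamma_mono {a b : ℝ} (ha : 0 < a) (hab : a ≤ b) : digamma a ≤ digamma b := by
  rcases eq_or_lt_of_le hab with rfl | h
  · exact le_rfl
  · calc digamma a ≤ slope (fun y : ℝ => Real.log (Real.Gamma y)) a b :=
        hcvx.deriv_le_slope (Set.mem_Ioi.2 ha) (Set.mem_Ioi.2 (ha.trans h)) h (diffLG ha)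
      _ ≤ digamma b :=
        hcvx.slope_le_deriv (Set.mem_Ioi.2 ha) (Set.mem_Ioi.2 (ha.trans h)) h
          (diffLG (ha.trans h))

/-- digamma is strictly monotone on positives. -/
private lemma digamma_strictMono {a b : ℝ} (ha : 0 < a) (hab : a < b) :
    digamma a < digamma b := by
  rcases lt_or_eq_of_le (digamma_mono ha hab.le) with h | h
  · exact h
  · exfalso
    have hb : 0 < b := ha.trans hab
    have h1 : digamma (a + 1) ≤ digamma (b + 1) :=
      digamma_mono (by linarith) (by linarith)
    rw [digamma_rec ha, digamma_rec hb, ← h] at h1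
    have : 1 / b < 1 / a := one_div_lt_one_div_of_lt ha hab
    linarith

/-- Upper bound : digamma u ≤ log u for u > 1. -/
private lemma digamma_le_log {u : ℝ} (hu : 1 < u) : digamma u ≤ Real.log u := by
  have h1 : (0:ℝ) < u - 1 := by linarith
  have h := hcvx.deriv_le_slope (Set.mem_Ioi.2 (by linarith : (0:ℝ) < u))
    (Set.mem_Ioi.2 (by linarith : (0:ℝ) < u + 1)) (by linarith) (diffLG (by linarith))
  refine h.trans (le_of_eq ?_)
  rw [slope_def_field, lg_rec (by linarith : (0:ℝ) < u)]
  field_simp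
  ring

/-- Lower bound : log (u-1) ≤ digamma u for u > 1. -/
private lemma log_le_digamma {u : ℝ} (hu : 1 < u) : Real.log (u - 1) ≤ digamma u := by
  have h1 : (0:ℝ) < u - 1 := by linarith
  have h := hcvx.slope_le_deriv (Set.mem_Ioi.2 h1)
    (Set.mem_Ioi.2 (by linarith : (0:ℝ) < u)) (by linarith) (diffLG (by linarith))
  refine le_trans (le_of_eq ?_) h
  rw [slope_def_field, show u = (u - 1) + 1 by ring, lg_rec h1]
  ring_nf

/-- The increment tends to zero. -/
private lemma tendsto_incr {x t : ℝ} (hx : 0 < x) (ht : 0 < t) :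
    Tendsto (fun n : ℕ => digamma (x + n + t) - digamma (x + n)) atTop (𝓝 0) := by
  have hseq : Tendsto (fun n : ℕ => x + (n:ℝ) - 1) atTop atTop := by
    apply tendsto_atTop_add_const_right
    exact tendsto_atTop_add_const_left _ _ tendsto_natCast_atTop_atTop
  have hratio : Tendsto (fun n : ℕ => (x + n + t) / (x + n - 1)) atTop (𝓝 1) := by
    have h0 : Tendsto (fun n : ℕ => (t + 1) / (x + n - 1)) atTop (𝓝 0) :=
      Tendsto.div_atTop tendsto_const_nhds hseq
    have h1 : Tendsto (fun n : ℕ => 1 + (t + 1) / (x + n - 1)) atTop (𝓝 1) := by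
      simpa using h0.const_add 1
    apply h1.congr'
    filter_upwards [hseq.eventually_gt_atTop 0] with n hn
    field_simp
    ring
  have hlog : Tendsto (fun n : ℕ => Real.log ((x + n + t) / (x + n - 1))) atTop (𝓝 0) := by
    have := (Real.continuousAt_log one_ne_zero).tendsto.comp hratio
    simpa [Function.comp_def] using this
  apply squeeze_zero' ?_ ?_ hlog
  · filter_upwards with n
    have : (0:ℝ) ≤ n := n.cast_nonneg
    have := digamma_mono (by linarith : (0:ℝ) < x + n) (by linarith : x + n ≤ x + n + t)
    linarith
  · filter_upwards [eventually_ge_atTop 1] with n hn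
    have hn1 : (1:ℝ) ≤ n := by exact_mod_cast hn
    have hd : (0:ℝ) < x + n - 1 := by linarith
    rw [Real.log_div (by linarith) hd.ne']
    have h1 : digamma (x + n + t) ≤ Real.log (x + n + t) := digamma_le_log (by linarith)
    have h2 : Real.log (x + n - 1) ≤ digamma (x + n) := by
      have := log_le_digamma (u := x + n) (by linarith)
      simpa using this
    linarith

/-- Key: strict comparison of increments (digamma has decreasing increments). -/
private lemma incr_strict {a b t : ℝ} (ha : 0 < a) (hab : a < b) (ht : 0 < t) :
    digamma (b + t) - digamma b < digamma (a + t) - digamma a := by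
  have hb : 0 < b := ha.trans hab
  set D : ℝ → ℝ := fun x => digamma (x + t) - digamma x with hD
  set φ : ℝ → ℝ := fun x => 1 / x - 1 / (x + t) with hφ
  have hφ_eq : ∀ x : ℝ, 0 < x → φ x = t / (x * (x + t)) := by
    intro x hx
    simp only [φ]
    field_simp
    ring
  have step : ∀ x : ℝ, 0 < x → D (x + 1) = D x - φ x := by
    intro x hx
    simp only [D, φ]
    rw [show x + 1 + t = (x + t) + 1 by ring, digamma_rec (by linarith : (0:ℝ) < x + t),
      digamma_rec hx]
    ring
  have telescope : ∀ x : ℝ, 0 < x → ∀ m : ℕ,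
      D (x + m) = D x - ∑ j ∈ Finset.range m, φ (x + j) := by
    intro x hx m
    induction m with
    | zero => simp
    | succ k ih =>
      rw [Finset.sum_range_succ, show x + (↑(k + 1) : ℝ) = (x + k) + 1 by push_cast; ring,
        step (x + k) (by positivity), ih]
      ring
  -- comparison of φ terms
  have hφ_mono : ∀ u v : ℝ, 0 < u → u < v → φ v < φ u := by
    intro u v hu huv
    rw [hφ_eq u hu, hφ_eq v (hu.trans huv)]
    apply div_lt_div_of_pos_left ht (by positivity)
    nlinarith
  have hφ_mono' : ∀ u v : ℝ, 0 < u → u ≤ v → φ v ≤ φ u := by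
    intro u v hu huv
    rcases eq_or_lt_of_le huv with rfl | h
    · exact le_rfl
    · exact (hφ_mono u v hu h).le
  -- for every m ≥ 1 : D a - D b ≥ (φ a - φ b) + (D (a+m) - D (b+m))
  have key : ∀ m : ℕ, 1 ≤ m →
      φ a - φ b + (D (a + m) - D (b + m)) ≤ D a - D b := by
    intro m hm
    have hta := telescope a ha m
    have htb := telescope b hb m
    have hsum : φ a - φ b ≤ ∑ j ∈ Finset.range m, (φ (a + j) - φ (b + j)) := by
      have h0 : (0 : ℕ) ∈ Finset.range m := Finset.mem_range.2 hm
      have := Finset.single_le_sum (f := fun j : ℕ => φ (a + j) - φ (b + j))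
        (fun j _ => by
          have hj : (0:ℝ) ≤ j := Nat.cast_nonneg j
          have := hφ_mono' (a + j) (b + j) (by linarith) (by linarith)
          simpa using sub_nonneg.2 this) h0
      simpa using this
    have hsplit : ∑ j ∈ Finset.range m, (φ (a + j) - φ (b + j))
        = (∑ j ∈ Finset.range m, φ (a + j)) - ∑ j ∈ Finset.range m, φ (b + j) :=
      Finset.sum_sub_distrib _ _
    rw [hsplit] at hsum
    have : D (a + m) - D (b + m)
        = D a - D b - ((∑ j ∈ Finset.range m, φ (a + j)) - ∑ j ∈ Finset.range m, φ (b + j)) := by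
      rw [hta, htb]; ring
    linarith
  have hlim : Tendsto (fun m : ℕ => φ a - φ b + (D (a + m) - D (b + m))) atTop
      (𝓝 (φ a - φ b)) := by
    have := (tendsto_incr ha ht).sub (tendsto_incr hb ht)
    simpa using this.const_add (φ a - φ b)
  have hge : φ a - φ b ≤ D a - D b := by
    apply le_of_tendsto hlim
    filter_upwards [eventually_ge_atTop 1] with m hm using key m hm
  have hφab : 0 < φ a - φ b := by
    have := hφ_mono a b ha hab
    linarith
  have : 0 < D a - D b := lt_of_lt_of_le hφab hge
  simp only [D] at this
  linarith

private lemma digamma_one : digamma 1 = -Real.eulerMascheroniConstant := by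
  have h := Real.deriv_Gamma_nat 0
  norm_num [harmonic_zero] at h
  unfold digamma
  rw [deriv.log (Real.differentiableAt_Gamma (ne_neg_nat one_pos))
    (by rw [Real.Gamma_one]; norm_num)]
  rw [Real.Gamma_one, h]
  norm_num

theorem stmt_14 (c : ℝ) (hc : c ∈ Set.Ioc (0:ℝ) 1) (n : ℕ) (hn : 1 ≤ n) :
    StrictAntiOn (Rtilde c n) (Set.Ioo 0 (c / 2)) ∧
      StrictMonoOn (Rtilde c n) (Set.Ioc (c / 2) c) ∧
      ∀ x ∈ Set.Ioc 0 c, Rtilde c n x < 0 := by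
  obtain ⟨hc0, hc1⟩ := hc
  have hn1 : (1:ℝ) ≤ n := by exact_mod_cast hn
  refine ⟨?_, ?_, ?_⟩
  · -- strictly decreasing on (0, c/2)
    intro x hx y hy hxy
    obtain ⟨hx0, hx2⟩ := hx
    obtain ⟨hy0, hy2⟩ := hy
    have key := incr_strict (a := (n:ℝ) + x) (b := (n:ℝ) + c - y) (t := y - x)
      (by linarith) (by linarith) (by linarith)
    rw [show ((n:ℝ) + c - y) + (y - x) = n + c - x by ring,
      show ((n:ℝ) + x) + (y - x) = n + y by ring] at key
    unfold Rtilde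
    linarith
  · -- strictly increasing on (c/2, c]
    intro x hx y hy hxy
    obtain ⟨hx2, hxc⟩ := hx
    obtain ⟨hy2, hyc⟩ := hy
    have key := incr_strict (a := (n:ℝ) + c - y) (b := (n:ℝ) + x) (t := y - x)
      (by linarith) (by linarith) (by linarith)
    rw [show ((n:ℝ) + x) + (y - x) = n + y by ring,
      show ((n:ℝ) + c - y) + (y - x) = n + c - x by ring] at key
    unfold Rtilde
    linarith
  · -- negativity
    intro x hx
    obtain ⟨hx0, hxc⟩ := hx
    have h1 : digamma 1 < digamma (n + x) := digamma_strictMono one_pos (by linarith)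
    have h2 : digamma 1 ≤ digamma (n + c - x) := digamma_mono one_pos (by linarith)
    rw [digamma_one] at h1 h2
    unfold Rtilde
    linarith
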